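/- arXiv:1009.1512 — 2 statements merged into one kernel-verified Lean document; each statement's English description precedes it below -/
import Mathlib

section
/- Let C ⊆ H_n be a nonempty binary code and define its distance distribution x_i = (1/|C|)·|{(x,y) ∈ C² : d_H(x,y) = i}| for 0 ≤ i ≤ n. Then: (1) Σ_{i=0}^n K_k^n(i) x_i ≥ 0 for all 0 ≤ k ≤ n; (2) x_i ≥ 0 for all i; (3) x_0 = 1; (4) Σ_{i=0}^n x_i = |C|. Moreover, if d_H(x,y) ≥ d for all distinct x, y ∈ C, then x_i = 0 for i = 1, …, d−1. -/
open Finset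

/-- The Krawtchouk polynomial `K_k^n(t) = ∑_{j=0}^k (−1)^j C(t,j) C(n−t,k−j)`,
evaluated at a natural number `t`. -/
def krawtchouk (n k t : ℕ) : ℝ :=
  ∑ j ∈ Finset.range (k + 1),
    (-1 : ℝ) ^ j * (Nat.choose t j : ℝ) * (Nat.choose (n - t) (k - j) : ℝ)

/-- The sign character of `ZMod 2`. -/
noncomputable def chi (a : ZMod 2) : ℝ := (-1 : ℝ) ^ a.val

lemma chi_add (a b : ZMod 2) : chi (a + b) = chi a * chi b := by
  rw [chi, chi, chi, ZMod.val_add, ← neg_one_pow_eq_pow_mod_two, pow_add]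

lemma chi_natCast (m : ℕ) : chi (m : ZMod 2) = (-1 : ℝ) ^ m := by
  rw [chi, ZMod.val_natCast]
  rcases Nat.even_or_odd m with h | h
  · rw [Nat.even_iff.mp h, h.neg_one_pow]; norm_num
  · rw [Nat.odd_iff.mp h, h.neg_one_pow]; norm_num

/-- Dot product on `Fin n → ZMod 2`. -/
def dotp {n : ℕ} (x z : Fin n → ZMod 2) : ZMod 2 := ∑ i, x i * z i

lemma dotp_sub {n : ℕ} (x y z : Fin n → ZMod 2) :
    dotp (x - y) z = dotp x z + dotp y z := by
  have : dotp (x - y) z = dotp x z - dotp y z := by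
    simp [dotp, sub_mul, Finset.sum_sub_distrib]
  rw [this, sub_eq_add_neg, CharTwo.neg_eq]

lemma dotp_eq_card {n : ℕ} (w z : Fin n → ZMod 2) :
    dotp w z = ((((univ : Finset (Fin n)).filter fun i => w i ≠ 0) ∩
      (univ.filter fun i => z i ≠ 0)).card : ZMod 2) := by
  have h : ∀ a b : ZMod 2, a * b = if a ≠ 0 ∧ b ≠ 0 then 1 else 0 := by decide
  have h2 : ∑ i, w i * z i = ∑ i, if w i ≠ 0 ∧ z i ≠ 0 then (1 : ZMod 2) else 0 :=
    Finset.sum_congr rfl fun i _ => h (w i) (z i)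
  rw [dotp, h2, Finset.sum_boole]
  congr 1
  exact congrArg Finset.card (Finset.filter_and _ _ _)

lemma count_inter (n k j : ℕ) (A : Finset (Fin n)) (hj : j ≤ k) :
    (((powersetCard k (univ : Finset (Fin n)))).filter fun B => (A ∩ B).card = j).card
      = A.card.choose j * (n - A.card).choose (k - j) := by
  classical
  have key : (((powersetCard k (univ : Finset (Fin n)))).filter
        fun B => (A ∩ B).card = j).card
      = ((powersetCard j A) ×ˢ (powersetCard (k - j) Aᶜ)).card := by
    apply Finset.card_bij' (fun B _ => (B ∩ A, B \ A)) (fun P _ => P.1 ∪ P.2)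
    · intro B hB
      simp only [Finset.mem_filter, Finset.mem_powersetCard] at hB
      obtain ⟨⟨-, hcard⟩, hj'⟩ := hB
      simp only [Finset.mem_product, Finset.mem_powersetCard]
      have h' : (B ∩ A).card = j := by rwa [Finset.inter_comm] at hj'
      refine ⟨⟨Finset.inter_subset_right, h'⟩, ⟨fun x hx => ?_, ?_⟩⟩
      · simp only [Finset.mem_sdiff] at hx
        simp [Finset.mem_compl, hx.2]
      · have := Finset.card_sdiff_add_card_inter B A
        omega
    · intro P hP
      simp only [Finset.mem_product, Finset.mem_powersetCard] at hP
      obtain ⟨⟨hP1, hP1c⟩, hP2, hP2c⟩ := hP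
      have hdisj : Disjoint P.1 P.2 := by
        refine Finset.disjoint_left.mpr fun a ha ha2 => ?_
        exact (Finset.mem_compl.mp (hP2 ha2)) (hP1 ha)
      simp only [Finset.mem_filter, Finset.mem_powersetCard]
      refine ⟨⟨Finset.subset_univ _, ?_⟩, ?_⟩
      · rw [Finset.card_union_of_disjoint hdisj, hP1c, hP2c]; omega
      · have : A ∩ (P.1 ∪ P.2) = P.1 := by
          rw [Finset.inter_union_distrib_left]
          have h1 : A ∩ P.1 = P.1 := Finset.inter_eq_right.mpr hP1
          have h2 : A ∩ P.2 = ∅ := by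
            apply Finset.eq_empty_of_forall_notMem
            intro a ha
            simp only [Finset.mem_inter] at ha
            exact (Finset.mem_compl.mp (hP2 ha.2)) ha.1
          rw [h1, h2, Finset.union_empty]
        rw [this, hP1c]
    · intro B hB
      rw [Finset.union_comm, Finset.sdiff_union_inter]
    · intro P hP
      simp only [Finset.mem_product, Finset.mem_powersetCard] at hP
      obtain ⟨⟨hP1, hP1c⟩, hP2, hP2c⟩ := hP
      have h2 : ∀ a ∈ P.2, a ∉ A := fun a ha => Finset.mem_compl.mp (hP2 ha)
      have e1 : (P.1 ∪ P.2) ∩ A = P.1 := by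
        rw [Finset.union_inter_distrib_right, Finset.inter_eq_left.mpr hP1]
        have : P.2 ∩ A = ∅ := Finset.eq_empty_of_forall_notMem fun a ha => by
          simp only [Finset.mem_inter] at ha; exact h2 a ha.1 ha.2
        rw [this, Finset.union_empty]
      have e2 : (P.1 ∪ P.2) \ A = P.2 := by
        ext a
        simp only [Finset.mem_sdiff, Finset.mem_union]
        constructor
        · rintro ⟨h1 | h1, hna⟩
          · exact absurd (hP1 h1) hna
          · exact h1
        · intro ha; exact ⟨Or.inr ha, h2 a ha⟩
      rw [e1, e2]
  rw [key, Finset.card_product, Finset.card_powersetCard, Finset.card_powersetCard,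
    Finset.card_compl, Fintype.card_fin]

lemma kraw_count (n k : ℕ) (A : Finset (Fin n)) :
    ∑ B ∈ powersetCard k (univ : Finset (Fin n)), (-1 : ℝ) ^ (A ∩ B).card
      = krawtchouk n k A.card := by
  classical
  rw [← Finset.sum_fiberwise_of_maps_to (g := fun B => (A ∩ B).card)
      (t := Finset.range (k + 1)) (fun B hB => by
        rw [Finset.mem_range, Nat.lt_succ_iff]
        calc (A ∩ B).card ≤ B.card := Finset.card_le_card Finset.inter_subset_right
          _ = k := (Finset.mem_powersetCard.mp hB).2)]
  rw [krawtchouk]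
  refine Finset.sum_congr rfl fun j hj => ?_
  have hj' : j ≤ k := Nat.lt_succ_iff.mp (Finset.mem_range.mp hj)
  have step : ∀ B ∈ (powersetCard k (univ : Finset (Fin n))).filter
      (fun B => (A ∩ B).card = j), ((-1 : ℝ) ^ (A ∩ B).card) = (-1 : ℝ) ^ j := by
    intro B hB
    rw [(Finset.mem_filter.mp hB).2]
  rw [Finset.sum_congr rfl step, Finset.sum_const, count_inter n k j A hj', nsmul_eq_mul]
  push_cast
  ring

lemma sum_chi (n k : ℕ) (w : Fin n → ZMod 2) :
    ∑ z ∈ (univ : Finset (Fin n → ZMod 2)).filter (fun z => hammingNorm z = k),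
      chi (dotp w z) = krawtchouk n k (hammingNorm w) := by
  classical
  have hnorm : ∀ v : Fin n → ZMod 2,
      hammingNorm v = ((univ : Finset (Fin n)).filter fun i => v i ≠ 0).card := by
    intro v; rfl
  have hfB : ∀ B : Finset (Fin n),
      ((univ : Finset (Fin n)).filter
        fun i => (if i ∈ B then (1 : ZMod 2) else 0) ≠ 0) = B := by
    intro B
    ext i
    simp only [Finset.mem_filter, Finset.mem_univ, true_and]
    by_cases h : i ∈ B <;> simp [h]
  rw [hnorm w, ← kraw_count n k (univ.filter fun i => w i ≠ 0)]
  refine Finset.sum_bij' (i := fun z _ => (univ : Finset (Fin n)).filter fun i => z i ≠ 0)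
    (j := fun B _ => fun i => if i ∈ B then (1 : ZMod 2) else 0) ?_ ?_ ?_ ?_ ?_
  · intro z hz
    rw [Finset.mem_powersetCard]
    exact ⟨Finset.subset_univ _, by rw [← hnorm z]; exact (Finset.mem_filter.mp hz).2⟩
  · intro B hB
    simp only [Finset.mem_filter, Finset.mem_univ, true_and]
    show hammingNorm (fun i => if i ∈ B then (1 : ZMod 2) else 0) = k
    rw [hnorm, hfB B, (Finset.mem_powersetCard.mp hB).2]
  · intro z hz
    funext i
    have hcase : ∀ a : ZMod 2, a ≠ 0 → a = 1 := by decide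
    by_cases h : z i = 0
    · simp [h]
    · simp [h, hcase (z i) h]
  · intro B hB
    exact hfB B
  · intro z hz
    simp only [dotp_eq_card, chi_natCast]

/-- Properties of the distance distribution
`x_i = (1/|C|)·|{(x,y) ∈ C² : d_H(x,y) = i}|` of a nonempty binary code `C ⊆ H_n`:
the Krawtchouk inequalities, nonnegativity, `x_0 = 1`, `∑ x_i = |C|`, and the vanishing
`x_i = 0` for `1 ≤ i ≤ d−1` when `C` has minimal distance at least `d`. -/
theorem distance_distribution_properties (n : ℕ) (C : Finset (Fin n → ZMod 2))
    (hC : C.Nonempty) (x : ℕ → ℝ)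
    (hx : ∀ i, x i =
      (((C ×ˢ C).filter fun p => hammingDist p.1 p.2 = i).card : ℝ) / (C.card : ℝ)) :
    (∀ k ≤ n, 0 ≤ ∑ i ∈ Finset.range (n + 1), krawtchouk n k i * x i) ∧
    (∀ i, 0 ≤ x i) ∧
    x 0 = 1 ∧
    (∑ i ∈ Finset.range (n + 1), x i) = C.card ∧
    (∀ d : ℕ, (∀ u ∈ C, ∀ v ∈ C, u ≠ v → d ≤ hammingDist u v) →
      ∀ i, 1 ≤ i → i ≤ d - 1 → x i = 0) := by
  classical
  have hN : (0 : ℝ) < (C.card : ℝ) := by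
    exact_mod_cast Finset.card_pos.mpr hC
  have hmaps : ∀ p ∈ C ×ˢ C, hammingDist p.1 p.2 ∈ Finset.range (n + 1) := by
    intro p _
    rw [Finset.mem_range, Nat.lt_succ_iff]
    calc hammingDist p.1 p.2 ≤ Fintype.card (Fin n) := hammingDist_le_card_fintype
      _ = n := Fintype.card_fin n
  refine ⟨?_, ?_, ?_, ?_, ?_⟩
  · -- Krawtchouk inequalities
    intro k _
    have key : ∑ i ∈ Finset.range (n + 1), krawtchouk n k i *
        ((((C ×ˢ C).filter fun p => hammingDist p.1 p.2 = i).card : ℝ))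
        = ∑ p ∈ C ×ˢ C, krawtchouk n k (hammingDist p.1 p.2) := by
      rw [← Finset.sum_fiberwise_of_maps_to (g := fun p : (Fin n → ZMod 2) × (Fin n → ZMod 2) => hammingDist p.1 p.2) hmaps]
      refine Finset.sum_congr rfl fun i _ => ?_
      have step : ∀ p ∈ (C ×ˢ C).filter (fun p => hammingDist p.1 p.2 = i),
          krawtchouk n k (hammingDist p.1 p.2) = krawtchouk n k i := by
        intro p hp
        rw [(Finset.mem_filter.mp hp).2]
      rw [Finset.sum_congr rfl step, Finset.sum_const, nsmul_eq_mul, mul_comm]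
    have key2 : ∑ p ∈ C ×ˢ C, krawtchouk n k (hammingDist p.1 p.2)
        = ∑ z ∈ (univ : Finset (Fin n → ZMod 2)).filter (fun z => hammingNorm z = k),
            (∑ c ∈ C, chi (dotp c z)) ^ 2 := by
      have hterm : ∀ p ∈ C ×ˢ C, krawtchouk n k (hammingDist p.1 p.2)
          = ∑ z ∈ (univ : Finset (Fin n → ZMod 2)).filter (fun z => hammingNorm z = k),
              chi (dotp p.1 z) * chi (dotp p.2 z) := by
        intro p _
        rw [hammingDist_comm, hammingDist_eq_hammingNorm, neg_add_eq_sub, ← sum_chi n k (p.1 - p.2)]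
        refine Finset.sum_congr rfl fun z _ => ?_
        rw [dotp_sub, chi_add]
      rw [Finset.sum_congr rfl hterm, Finset.sum_comm]
      refine Finset.sum_congr rfl fun z _ => ?_
      rw [sq, Finset.sum_mul_sum]
      rw [Finset.sum_product]
    have hxsum : ∑ i ∈ Finset.range (n + 1), krawtchouk n k i * x i
        = (∑ z ∈ (univ : Finset (Fin n → ZMod 2)).filter (fun z => hammingNorm z = k),
            (∑ c ∈ C, chi (dotp c z)) ^ 2) / (C.card : ℝ) := by
      rw [← key2, ← key, Finset.sum_div]
      refine Finset.sum_congr rfl fun i _ => ?_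
      rw [hx i, mul_div_assoc]
    rw [hxsum]
    apply div_nonneg _ hN.le
    exact Finset.sum_nonneg fun z _ => sq_nonneg _
  · -- nonnegativity
    intro i
    rw [hx i]
    exact div_nonneg (Nat.cast_nonneg _) hN.le
  · -- x 0 = 1
    rw [hx 0]
    have : ((C ×ˢ C).filter fun p => hammingDist p.1 p.2 = 0) = C.image fun c => (c, c) := by
      ext p
      simp only [Finset.mem_filter, Finset.mem_product, Finset.mem_image,
        hammingDist_eq_zero]
      constructor
      · rintro ⟨⟨h1, -⟩, h⟩
        exact ⟨p.1, h1, by rw [Prod.ext_iff]; exact ⟨rfl, h⟩⟩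
      · rintro ⟨c, hc, rfl⟩
        exact ⟨⟨hc, hc⟩, rfl⟩
    rw [this, Finset.card_image_of_injective _ (fun a b h => (Prod.ext_iff.mp h).1)]
    exact div_self hN.ne'
  · -- sum = |C|
    have key : ∑ i ∈ Finset.range (n + 1),
        ((((C ×ˢ C).filter fun p => hammingDist p.1 p.2 = i).card : ℝ))
        = (C.card : ℝ) * (C.card : ℝ) := by
      have := Finset.sum_fiberwise_of_maps_to
        (g := fun p : (Fin n → ZMod 2) × (Fin n → ZMod 2) => hammingDist p.1 p.2) hmaps
        (fun _ => (1 : ℝ))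
      simp only [Finset.sum_const, nsmul_eq_mul, mul_one] at this
      rw [this, Finset.card_product, Nat.cast_mul]
    calc ∑ i ∈ Finset.range (n + 1), x i
        = (∑ i ∈ Finset.range (n + 1),
            ((((C ×ˢ C).filter fun p => hammingDist p.1 p.2 = i).card : ℝ))) / (C.card : ℝ) := by
          rw [Finset.sum_div]; exact Finset.sum_congr rfl fun i _ => hx i
      _ = (C.card : ℝ) := by rw [key, mul_div_assoc, div_self hN.ne', mul_one]
  · -- minimal distance
    intro d hd i hi1 hid
    rw [hx i]
    have : ((C ×ˢ C).filter fun p => hammingDist p.1 p.2 = i) = ∅ := by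
      apply Finset.eq_empty_of_forall_notMem
      rintro ⟨u, v⟩ hp
      simp only [Finset.mem_filter, Finset.mem_product] at hp
      obtain ⟨⟨hu, hv⟩, hdist⟩ := hp
      by_cases huv : u = v
      · subst huv
        simp [hammingDist_self] at hdist
        omega
      · have := hd u hu v hv huv
        omega
    rw [this]
    simp
end

section
/- (Characterization of invariant positive definite functions on the Hamming space.) Let B : H_n² → ℝ. Then the matrix (B(x,y))_{(x,y)∈H_n²} is symmetric positive semidefinite and B is Aut(H_n)-invariant (i.e., B(x+z, y+z) = B(x,y) for all z ∈ H_n, and B(π(x), π(y)) = B(x,y) for all coordinate permutations π ∈ S_n) if and only if there exist real numbers a_0, …, a_n ≥ 0 such that B(x,y) = Σ_{k=0}^n a_k K_k^n(d_H(x,y)) for all x, y ∈ H_n. -/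
open Finset

noncomputable def eps (b : ZMod 2) : ℝ := if b = 0 then 1 else -1

lemma eps_zero : eps 0 = 1 := by simp [eps]
lemma eps_one : eps 1 = -1 := by norm_num [eps]
lemma eps_add (a b : ZMod 2) : eps (a + b) = eps a * eps b := by
  rcases (by decide : ∀ c : ZMod 2, c = 0 ∨ c = 1) a with rfl | rfl <;>
    rcases (by decide : ∀ c : ZMod 2, c = 0 ∨ c = 1) b with rfl | rfl <;>
    norm_num [eps, show (2 : ZMod 2) = 0 from rfl, show (1 : ZMod 2) ≠ 0 by decide] <;> decide

noncomputable def chr {n : ℕ} (S : Finset (Fin n)) (x : Fin n → ZMod 2) : ℝ :=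
  ∏ i ∈ S, eps (x i)

lemma chr_add {n : ℕ} (S : Finset (Fin n)) (x y : Fin n → ZMod 2) :
    chr S (x + y) = chr S x * chr S y := by
  simp only [chr, ← Finset.prod_mul_distrib]
  exact Finset.prod_congr rfl fun i _ => eps_add _ _

lemma hammingDist_eq {n : ℕ} (x y : Fin n → ZMod 2) :
    hammingDist x y = #(univ.filter fun i => x i ≠ y i) := rfl

lemma inter_union_sdiff' {α : Type*} [DecidableEq α] (s t : Finset α) :
    s ∩ t ∪ s \ t = s := by
  ext a; simp only [Finset.mem_union, Finset.mem_inter, Finset.mem_sdiff]; tauto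

lemma chr_eq_pow {n : ℕ} (S : Finset (Fin n)) (t : Fin n → ZMod 2) :
    chr S t = (-1 : ℝ) ^ #(S ∩ univ.filter fun i => t i ≠ 0) := by
  classical
  set T := univ.filter fun i => t i ≠ 0 with hT
  have hdisj : Disjoint (S ∩ T) (S \ T) :=
    Finset.disjoint_left.2 fun a ha ha' => (Finset.mem_sdiff.1 ha').2 (Finset.mem_inter.1 ha).2
  have hsplit : chr S t = (∏ i ∈ S ∩ T, eps (t i)) * ∏ i ∈ S \ T, eps (t i) := by
    rw [← Finset.prod_union hdisj, inter_union_sdiff']; rfl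
  rw [hsplit]
  have h1 : ∏ i ∈ S ∩ T, eps (t i) = (-1 : ℝ) ^ #(S ∩ T) := by
    rw [Finset.prod_congr rfl (fun i hi => ?_), Finset.prod_const]
    have : t i ≠ 0 := by
      have := Finset.mem_inter.1 hi |>.2
      simpa [hT] using this
    simp [eps, this]
  have h2 : ∏ i ∈ S \ T, eps (t i) = 1 := by
    apply Finset.prod_eq_one
    intro i hi
    have : t i = 0 := by
      have := (Finset.mem_sdiff.1 hi).2
      simpa [hT] using this
    simp [eps, this]
  rw [h1, h2, mul_one]

lemma fiber_card {n k j : ℕ} (hj : j ≤ k) (T : Finset (Fin n)) :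
    #(((univ : Finset (Fin n)).powersetCard k).filter fun S => #(S ∩ T) = j)
      = (#T).choose j * (n - #T).choose (k - j) := by
  classical
  have := Finset.card_nbij' (s := ((univ : Finset (Fin n)).powersetCard k).filter
        fun S => #(S ∩ T) = j)
      (t := (T.powersetCard j) ×ˢ (Tᶜ.powersetCard (k - j)))
      (fun S => (S ∩ T, S \ T)) (fun p => p.1 ∪ p.2)
      (fun S hS => by
        dsimp only
        obtain ⟨hS1, hS2⟩ := Finset.mem_filter.1 hS
        obtain ⟨_, hcard⟩ := Finset.mem_powersetCard.1 hS1
        refine Finset.mem_product.2 ⟨Finset.mem_powersetCard.2 ⟨Finset.inter_subset_right, hS2⟩,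
          Finset.mem_powersetCard.2 ⟨?_, ?_⟩⟩
        · intro i hi
          simp only [Finset.mem_sdiff] at hi
          simpa using hi.2
        · show #(S \ T) = k - j
          have := Finset.card_sdiff_add_card_inter S T
          omega)
      (fun p hp => by
        dsimp only
        obtain ⟨h1, h2⟩ := Finset.mem_product.1 hp
        obtain ⟨h1s, h1c⟩ := Finset.mem_powersetCard.1 h1
        obtain ⟨h2s, h2c⟩ := Finset.mem_powersetCard.1 h2
        have hdisj : Disjoint p.1 p.2 := by
          refine Finset.disjoint_left.2 fun a ha ha' => ?_
          have := h2s ha'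
          simp only [Finset.mem_compl] at this
          exact this (h1s ha)
        refine Finset.mem_filter.2 ⟨Finset.mem_powersetCard.2 ⟨Finset.subset_univ _, ?_⟩, ?_⟩
        · rw [Finset.card_union_of_disjoint hdisj, h1c, h2c]; omega
        · have : (p.1 ∪ p.2) ∩ T = p.1 := by
            rw [Finset.union_inter_distrib_right,
              Finset.inter_eq_left.2 h1s]
            have : p.2 ∩ T = ∅ := by
              refine Finset.eq_empty_of_forall_notMem fun a ha => ?_
              obtain ⟨ha2, haT⟩ := Finset.mem_inter.1 ha
              have := h2s ha2
              simp only [Finset.mem_compl] at this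
              exact this haT
            rw [this, Finset.union_empty]
          rw [this, h1c])
      (fun S hS => inter_union_sdiff' S T)
      (fun p hp => by
        dsimp only
        obtain ⟨h1, h2⟩ := Finset.mem_product.1 hp
        obtain ⟨h1s, h1c⟩ := Finset.mem_powersetCard.1 h1
        obtain ⟨h2s, h2c⟩ := Finset.mem_powersetCard.1 h2
        have e1 : (p.1 ∪ p.2) ∩ T = p.1 := by
          rw [Finset.union_inter_distrib_right, Finset.inter_eq_left.2 h1s]
          have : p.2 ∩ T = ∅ := by
            refine Finset.eq_empty_of_forall_notMem fun a ha => ?_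
            obtain ⟨ha2, haT⟩ := Finset.mem_inter.1 ha
            have := h2s ha2
            simp only [Finset.mem_compl] at this
            exact this haT
          rw [this, Finset.union_empty]
        have e2 : (p.1 ∪ p.2) \ T = p.2 := by
          rw [Finset.union_sdiff_distrib]
          have a1 : p.1 \ T = ∅ := Finset.sdiff_eq_empty_iff_subset.2 h1s
          have a2 : p.2 \ T = p.2 := by
            refine Finset.sdiff_eq_self_iff_disjoint.2 ?_
            refine Finset.disjoint_left.2 fun a ha haT => ?_
            have := h2s ha
            simp only [Finset.mem_compl] at this
            exact this haT
          rw [a1, a2, Finset.empty_union]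
        rw [e1, e2])
  rw [this, Finset.card_product, Finset.card_powersetCard, Finset.card_powersetCard,
    Finset.card_compl, Fintype.card_fin]

lemma key_identity (n k : ℕ) (t : Fin n → ZMod 2) :
    ∑ S ∈ (univ : Finset (Fin n)).powersetCard k, chr S t
      = krawtchouk n k (hammingDist t 0) := by
  classical
  set T := univ.filter fun i => t i ≠ 0 with hT
  have hwt : hammingDist t 0 = #T := by
    rw [hammingDist_eq]; rfl
  rw [hwt, krawtchouk]
  rw [← Finset.sum_fiberwise_of_maps_to (g := fun S => #(S ∩ T)) (t := Finset.range (k + 1))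
    (fun S hS => by
      obtain ⟨_, hc⟩ := Finset.mem_powersetCard.1 hS
      have : #(S ∩ T) ≤ #S := Finset.card_le_card Finset.inter_subset_left
      rw [Finset.mem_range]; omega)]
  refine Finset.sum_congr rfl fun j hj => ?_
  have hj' : j ≤ k := by simpa using Nat.lt_succ_iff.1 (Finset.mem_range.1 hj)
  have : ∀ S ∈ ((univ : Finset (Fin n)).powersetCard k).filter fun S => #(S ∩ T) = j,
      chr S t = (-1 : ℝ) ^ j := by
    intro S hS
    rw [chr_eq_pow, ← hT, (Finset.mem_filter.1 hS).2]
  rw [Finset.sum_congr rfl this, Finset.sum_const, fiber_card hj' T, nsmul_eq_mul]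
  push_cast
  ring

lemma sum_chr {n : ℕ} (t : Fin n → ZMod 2) :
    ∑ S ∈ (univ : Finset (Fin n)).powerset, chr S t
      = if t = 0 then (2 : ℝ) ^ n else 0 := by
  classical
  have h := Finset.prod_add (fun i => eps (t i)) (fun _ => (1 : ℝ)) (univ : Finset (Fin n))
  simp only [Finset.prod_const_one, mul_one] at h
  simp only [chr]
  rw [← h]
  by_cases ht : t = 0
  · subst ht
    simp [eps_zero, Finset.prod_const, Finset.card_univ]
    norm_num
  · have : ∃ i, t i ≠ 0 := by
      by_contra hc
      push_neg at hc
      exact ht (funext hc)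
    obtain ⟨i, hi⟩ := this
    rw [if_neg ht]
    apply Finset.prod_eq_zero (Finset.mem_univ i)
    simp [eps, hi]

lemma chr_image {n : ℕ} (π : Equiv.Perm (Fin n)) (S : Finset (Fin n)) (x : Fin n → ZMod 2) :
    chr (S.image π) x = chr S (x ∘ π) := by
  rw [chr, Finset.prod_image (fun a _ b _ h => π.injective h)]
  rfl

lemma sum_comp_perm {n : ℕ} (π : Equiv.Perm (Fin n)) (F : (Fin n → ZMod 2) → ℝ) :
    ∑ t : Fin n → ZMod 2, F (t ∘ π) = ∑ t : Fin n → ZMod 2, F t := by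
  apply Fintype.sum_bijective (fun t : Fin n → ZMod 2 => t ∘ π)
  · constructor
    · intro a b h
      funext i
      have := congrFun h (π.symm i)
      simpa using this
    · intro b
      exact ⟨b ∘ π.symm, funext fun i => by simp⟩
  · intro t; rfl

lemma exists_perm_image {n : ℕ} {S T : Finset (Fin n)} (h : #S = #T) :
    ∃ π : Equiv.Perm (Fin n), S.image π = T := by
  classical
  have e1 : {x // x ∈ S} ≃ {x // x ∈ T} :=
    Fintype.equivOfCardEq (by simp [Fintype.card_coe, h])
  have e2 : {x // x ∉ S} ≃ {x // x ∉ T} := by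
    apply Fintype.equivOfCardEq
    rw [Fintype.card_subtype_compl, Fintype.card_subtype_compl]
    simp [Fintype.card_coe, h]
  refine ⟨(Equiv.sumCompl (· ∈ S)).symm.trans ((e1.sumCongr e2).trans (Equiv.sumCompl (· ∈ T))), ?_⟩
  apply Finset.eq_of_subset_of_card_le
  · intro y hy
    obtain ⟨x, hx, rfl⟩ := Finset.mem_image.1 hy
    simp only [Equiv.trans_apply]
    rw [Equiv.sumCompl_symm_apply_of_pos (p := (· ∈ S)) hx]
    simp only [Equiv.sumCongr_apply, Sum.map_inl, Equiv.sumCompl_apply_inl]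
    exact (e1 ⟨x, hx⟩).2
  · rw [Finset.card_image_of_injective _ (Equiv.injective _), h]

lemma zmod2_add_eq_zero : ∀ a b : ZMod 2, a + b = 0 ↔ a = b := by decide

lemma pi_add_eq_zero {n : ℕ} (u t : Fin n → ZMod 2) : u + t = 0 ↔ u = t := by
  constructor
  · intro h; funext i; exact (zmod2_add_eq_zero _ _).1 (congrFun h i)
  · rintro rfl; funext i; exact (zmod2_add_eq_zero _ _).2 rfl

lemma hammingDist_add_zero {n : ℕ} (x y : Fin n → ZMod 2) :
    hammingDist (x + y) 0 = hammingDist x y := by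
  simp only [hammingDist_eq]
  congr 1
  apply Finset.filter_congr
  intro i _
  simp only [Pi.add_apply, Pi.zero_apply, ne_eq, zmod2_add_eq_zero]

lemma hammingDist_translate {n : ℕ} (x y z : Fin n → ZMod 2) :
    hammingDist (x + z) (y + z) = hammingDist x y := by
  simp only [hammingDist_eq]
  congr 1
  apply Finset.filter_congr
  intro i _
  simp [Pi.add_apply]

lemma hammingDist_comp_perm {n : ℕ} (π : Equiv.Perm (Fin n)) (x y : Fin n → ZMod 2) :
    hammingDist (x ∘ π) (y ∘ π) = hammingDist x y := by
  simp only [hammingDist_eq, Finset.card_filter, Function.comp_apply]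
  exact Equiv.sum_comp π (fun i => if x i ≠ y i then 1 else 0)

lemma kraw_eq {n : ℕ} (k : ℕ) (x y : Fin n → ZMod 2) :
    ∑ S ∈ (univ : Finset (Fin n)).powersetCard k, chr S x * chr S y
      = krawtchouk n k (hammingDist x y) := by
  rw [← hammingDist_add_zero x y, ← key_identity]
  exact Finset.sum_congr rfl fun S _ => (chr_add S x y).symm

open Matrix in
/-- Characterization of the `Aut(H_n)`-invariant positive definite functions on the
binary Hamming space: `B : H_n² → ℝ` is positive semidefinite (as a matrix) and
invariant under translations and coordinate permutations if and only if
`B(x,y) = ∑_{k=0}^n a_k K_k^n(d_H(x,y))` for some nonnegative reals `a_0, …, a_n`. -/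
theorem invariant_posSemidef_iff_krawtchouk (n : ℕ) (B : (Fin n → ZMod 2) → (Fin n → ZMod 2) → ℝ) :
    ((Matrix.of B).PosSemidef ∧
      (∀ z x y : Fin n → ZMod 2, B (x + z) (y + z) = B x y) ∧
      (∀ π : Equiv.Perm (Fin n), ∀ x y : Fin n → ZMod 2, B (x ∘ π) (y ∘ π) = B x y)) ↔
    (∃ a : Fin (n + 1) → ℝ, (∀ k, 0 ≤ a k) ∧
      ∀ x y : Fin n → ZMod 2,
        B x y = ∑ k : Fin (n + 1), a k * krawtchouk n k (hammingDist x y)) := by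
  classical
  constructor
  · rintro ⟨hP, hT, hπ⟩
    set f : (Fin n → ZMod 2) → ℝ := fun t => B t 0 with hf
    have hBf : ∀ x y, B x y = f (x + y) := by
      intro x y
      have h1 : B (x + y) (y + y) = B x y := hT y x y
      have h2 : y + y = 0 := by
        funext i
        exact (zmod2_add_eq_zero _ _).2 rfl
      rw [← h1, h2]
    set fhat : Finset (Fin n) → ℝ := fun S => ∑ t, f t * chr S t with hfhat
    -- quadratic form computation
    have hquad : ∀ S : Finset (Fin n),
        dotProduct (star (chr S)) ((Matrix.of B) *ᵥ (chr S)) = 2 ^ n * fhat S := by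
      intro S
      simp only [dotProduct, Matrix.mulVec, Matrix.of_apply, Pi.star_apply,
        star_trivial]
      have hx : ∀ x : Fin n → ZMod 2,
          chr S x * ∑ y, B x y * chr S y = ∑ u, f u * chr S u := by
        intro x
        rw [Finset.mul_sum]
        calc ∑ y, chr S x * (B x y * chr S y)
            = ∑ y, (fun u => f u * chr S u) ((Equiv.addLeft x) y) := by
              refine Finset.sum_congr rfl fun y _ => ?_
              show chr S x * (B x y * chr S y) = f (x + y) * chr S (x + y)
              rw [hBf x y, chr_add]
              try ring
          _ = ∑ u, f u * chr S u := by
              simpa using Equiv.sum_comp (Equiv.addLeft x) fun u => f u * chr S u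
      rw [Finset.sum_congr rfl (fun x _ => hx x), Finset.sum_const, Finset.card_univ]
      rw [Fintype.card_fun]
      simp [nsmul_eq_mul]
      try ring
    have hfhat_nonneg : ∀ S, 0 ≤ fhat S := by
      intro S
      have h0 := hP.dotProduct_mulVec_nonneg (chr S)
      rw [hquad S] at h0
      have h2 : (0:ℝ) < 2 ^ n := by positivity
      nlinarith
    -- invariance of fhat under permutations
    have hf_perm : ∀ (π : Equiv.Perm (Fin n)) (t : Fin n → ZMod 2), f (t ∘ π) = f t := by
      intro π t
      have : (0 : Fin n → ZMod 2) ∘ π = 0 := rfl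
      calc f (t ∘ π) = B (t ∘ π) ((0 : Fin n → ZMod 2) ∘ π) := by rw [this]
        _ = B t 0 := hπ π t 0
    have hfhat_perm : ∀ (π : Equiv.Perm (Fin n)) (S : Finset (Fin n)),
        fhat (S.image π) = fhat S := by
      intro π S
      calc fhat (S.image π) = ∑ t, f t * chr S (t ∘ π) := by
            exact Finset.sum_congr rfl fun t _ => by rw [chr_image]
        _ = ∑ t, (fun u => f u * chr S u) (t ∘ π) := by
            refine Finset.sum_congr rfl fun t _ => ?_
            simp only
            rw [hf_perm π t]
        _ = ∑ t, f t * chr S t := by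
            simpa using sum_comp_perm π fun u => f u * chr S u
    have hfhat_const : ∀ S T : Finset (Fin n), #S = #T → fhat S = fhat T := by
      intro S T h
      obtain ⟨π, rfl⟩ := exists_perm_image h
      exact (hfhat_perm π S).symm
    -- choose representative sets
    have hsub : ∀ k : Fin (n + 1), ∃ S : Finset (Fin n), #S = (k : ℕ) := by
      intro k
      obtain ⟨S, _, hS⟩ := Finset.exists_subset_card_eq (s := (univ : Finset (Fin n))) (n := k)
        (by rw [Finset.card_univ, Fintype.card_fin]; exact Fin.is_le k)
      exact ⟨S, hS⟩
    choose Sk hSk using hsub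
    refine ⟨fun k => ((2:ℝ) ^ n)⁻¹ * fhat (Sk k), fun k => mul_nonneg (by positivity) (hfhat_nonneg _), ?_⟩
    intro x y
    -- Fourier inversion
    have hinv : ∀ t : Fin n → ZMod 2,
        ∑ S ∈ (univ : Finset (Fin n)).powerset, fhat S * chr S t = 2 ^ n * f t := by
      intro t
      calc ∑ S ∈ (univ : Finset (Fin n)).powerset, fhat S * chr S t
          = ∑ S ∈ (univ : Finset (Fin n)).powerset, ∑ u, f u * chr S (u + t) := by
            refine Finset.sum_congr rfl fun S _ => ?_
            rw [hfhat, Finset.sum_mul]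
            exact Finset.sum_congr rfl fun u _ => by rw [chr_add]; ring
        _ = ∑ u, ∑ S ∈ (univ : Finset (Fin n)).powerset, f u * chr S (u + t) :=
            Finset.sum_comm
        _ = ∑ u, f u * (if u + t = 0 then (2:ℝ) ^ n else 0) := by
            refine Finset.sum_congr rfl fun u _ => ?_
            rw [← Finset.mul_sum, sum_chr]
        _ = ∑ u, f u * (if u = t then (2:ℝ) ^ n else 0) := by
            refine Finset.sum_congr rfl fun u _ => ?_
            congr 1
            exact if_congr (pi_add_eq_zero u t) rfl rfl
        _ = 2 ^ n * f t := by
            simp only [mul_ite, mul_zero]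
            rw [Finset.sum_ite_eq' univ t (fun u => f u * 2 ^ n)]
            simp [mul_comm]
    have h2n : ((2:ℝ) ^ n) ≠ 0 := by positivity
    have hft : f (x + y) = ((2:ℝ) ^ n)⁻¹ *
        ∑ S ∈ (univ : Finset (Fin n)).powerset, fhat S * chr S (x + y) := by
      rw [hinv]; field_simp
    rw [hBf x y, hft]
    rw [Finset.sum_powerset]
    rw [Finset.card_univ, Fintype.card_fin]
    rw [← Fin.sum_univ_eq_sum_range
      (fun j => ∑ S ∈ powersetCard j (univ : Finset (Fin n)), fhat S * chr S (x + y)) (n+1)]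
    rw [Finset.mul_sum]
    refine Finset.sum_congr rfl fun k _ => ?_
    have hstep : ∑ S ∈ powersetCard (k : ℕ) (univ : Finset (Fin n)), fhat S * chr S (x + y)
        = fhat (Sk k) * krawtchouk n k (hammingDist x y) := by
      have : ∀ S ∈ powersetCard (k : ℕ) (univ : Finset (Fin n)),
          fhat S * chr S (x + y) = fhat (Sk k) * chr S (x + y) := by
        intro S hS
        rw [hfhat_const S (Sk k) (by rw [(Finset.mem_powersetCard.1 hS).2, hSk])]
      rw [Finset.sum_congr rfl this, ← Finset.mul_sum, key_identity,
        hammingDist_add_zero]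
    rw [hstep]; ring
  · rintro ⟨a, ha, hB⟩
    refine ⟨Matrix.PosSemidef.of_dotProduct_mulVec_nonneg ?_ ?_, ?_, ?_⟩
    · -- Hermitian
      ext x y
      rw [Matrix.conjTranspose_apply, Matrix.of_apply, Matrix.of_apply, star_trivial,
        hB, hB, hammingDist_comm]
    · -- quadratic form nonneg
      intro v
      have key : dotProduct (star v) ((Matrix.of B) *ᵥ v)
          = ∑ k : Fin (n + 1), a k * ∑ S ∈ powersetCard (k:ℕ) (univ : Finset (Fin n)),
              (∑ x, v x * chr S x) ^ 2 := by
        simp only [dotProduct, Matrix.mulVec, Matrix.of_apply, Pi.star_apply,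
          star_trivial]
        calc ∑ x, v x * ∑ y, B x y * v y
            = ∑ x, ∑ y, ∑ k : Fin (n + 1),
                ∑ S ∈ powersetCard (k:ℕ) (univ : Finset (Fin n)),
                  a k * ((v x * chr S x) * (v y * chr S y)) := by
              refine Finset.sum_congr rfl fun x _ => ?_
              rw [Finset.mul_sum]
              refine Finset.sum_congr rfl fun y _ => ?_
              rw [hB x y]
              simp only [← kraw_eq, Finset.mul_sum, Finset.sum_mul]
              exact Finset.sum_congr rfl fun k _ =>
                Finset.sum_congr rfl fun S _ => by ring
          _ = ∑ x, ∑ k : Fin (n + 1),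
                ∑ y, ∑ S ∈ powersetCard (k:ℕ) (univ : Finset (Fin n)),
                  a k * ((v x * chr S x) * (v y * chr S y)) := by
              exact Finset.sum_congr rfl fun x _ => Finset.sum_comm
          _ = ∑ k : Fin (n + 1), ∑ x,
                ∑ y, ∑ S ∈ powersetCard (k:ℕ) (univ : Finset (Fin n)),
                  a k * ((v x * chr S x) * (v y * chr S y)) := Finset.sum_comm
          _ = ∑ k : Fin (n + 1), ∑ x,
                ∑ S ∈ powersetCard (k:ℕ) (univ : Finset (Fin n)), ∑ y,
                  a k * ((v x * chr S x) * (v y * chr S y)) := by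
              exact Finset.sum_congr rfl fun k _ =>
                Finset.sum_congr rfl fun x _ => Finset.sum_comm
          _ = ∑ k : Fin (n + 1), ∑ S ∈ powersetCard (k:ℕ) (univ : Finset (Fin n)),
                ∑ x, ∑ y, a k * ((v x * chr S x) * (v y * chr S y)) := by
              exact Finset.sum_congr rfl fun k _ => Finset.sum_comm
          _ = ∑ k : Fin (n + 1), a k * ∑ S ∈ powersetCard (k:ℕ) (univ : Finset (Fin n)),
                (∑ x, v x * chr S x) ^ 2 := by
              refine Finset.sum_congr rfl fun k _ => ?_
              rw [Finset.mul_sum]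
              refine Finset.sum_congr rfl fun S _ => ?_
              rw [sq, Finset.sum_mul_sum]
              simp only [Finset.mul_sum]
      rw [key]
      apply Finset.sum_nonneg
      intro k _
      apply mul_nonneg (ha k)
      apply Finset.sum_nonneg
      intro S _
      positivity
    · intro z x y
      rw [hB, hB, hammingDist_translate]
    · intro π x y
      rw [hB, hB, hammingDist_comp_perm]
end
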